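/- Let j be a positive integer not divisible by 10 and let c be a positive integer, and set a = j·10^c. Then the congruence speed of a is not eventually constant: there is no value V and no threshold B such that for all b ≥ B the congruence speed V(a,b) equals V. Equivalently, for every B there exist b₂ > b₁ ≥ B with V(a,b₁) ≠ V(a,b₂). -/

import Mathlib

/-- Integer tetration: `tet a 0 = 1`, `tet a (b+1) = a ^ tet a b`. -/
def tet (a : ℕ) : ℕ → ℕ
  | 0 => 1
  | b + 1 => a ^ tet a b

/-- The number of rightmost decimal digits shared by `x` and `y`, i.e. the
largest `k` such that `x ≡ y (mod 10^k)`. -/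
noncomputable def sharedDigits (x y : ℕ) : ℕ := sSup {k : ℕ | x ≡ y [MOD 10 ^ k]}

/-- The congruence speed of `a` at height `b ≥ 1`. -/
noncomputable def congSpeed (a b : ℕ) : ℤ :=
  (sharedDigits (tet a (b + 1)) (tet a b) : ℤ) - (sharedDigits (tet a b) (tet a (b - 1)) : ℤ)

lemma shared_pow (a : ℕ) (ha2 : 2 ∣ a) (ha5 : 5 ∣ a) (ha : 2 ≤ a) {N n : ℕ} (h : N < n) :
    sharedDigits (a ^ n) (a ^ N) = N * min (a.factorization 2) (a.factorization 5) := by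
  set t := min (a.factorization 2) (a.factorization 5) with ht
  have ha0 : a ≠ 0 := by omega
  have haN : a ^ N ≠ 0 := pow_ne_zero _ ha0
  have hdvd2 : 2 ∣ a ^ (n - N) := dvd_pow ha2 (by omega)
  have hdvd5 : 5 ∣ a ^ (n - N) := dvd_pow ha5 (by omega)
  have hu1 : 1 ≤ a ^ (n - N) := Nat.one_le_pow _ _ (by omega)
  set u := a ^ (n - N) - 1 with hu
  have hcu2 : ¬ (2 ∣ u) := fun hdu => by
    have : (2 : ℕ) ∣ a ^ (n - N) - u := Nat.dvd_sub hdvd2 hdu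
    rw [hu] at this; omega
  have hcu5 : ¬ (5 ∣ u) := fun hdu => by
    have : (5 : ℕ) ∣ a ^ (n - N) - u := Nat.dvd_sub hdvd5 hdu
    rw [hu] at this; omega
  have hcop : Nat.Coprime 10 u := by
    have h2 : Nat.Coprime 2 u := (Nat.Prime.coprime_iff_not_dvd Nat.prime_two).mpr hcu2
    have h5 : Nat.Coprime 5 u := (Nat.Prime.coprime_iff_not_dvd (by norm_num)).mpr hcu5
    have : (10 : ℕ) = 2 * 5 := by norm_num
    rw [this, Nat.coprime_mul_iff_left]
    exact ⟨h2, h5⟩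
  -- difference factorization
  have hdiff : a ^ n - a ^ N = a ^ N * u := by
    rw [hu, Nat.mul_sub, mul_one, ← pow_add, Nat.add_sub_cancel' h.le]
  -- the dvd set
  have key : ∀ k : ℕ, (a ^ n ≡ a ^ N [MOD 10 ^ k]) ↔ k ≤ N * t := by
    intro k
    have hle : a ^ N ≤ a ^ n := Nat.pow_le_pow_right (by omega) h.le
    rw [Nat.ModEq.comm, Nat.modEq_iff_dvd' hle, hdiff]
    constructor
    · intro hk
      have hk' : 10 ^ k ∣ a ^ N := (Nat.Coprime.pow_left k hcop).dvd_of_dvd_mul_right hk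
      have h10 : (10 : ℕ) ^ k = 2 ^ k * 5 ^ k := by rw [← Nat.mul_pow]
      rw [h10] at hk'
      have h2k : 2 ^ k ∣ a ^ N := dvd_trans (dvd_mul_right _ _) hk'
      have h5k : 5 ^ k ∣ a ^ N := dvd_trans (dvd_mul_left _ _) hk'
      have hf2 : k ≤ (a ^ N).factorization 2 :=
        (Nat.Prime.pow_dvd_iff_le_factorization Nat.prime_two haN).mp h2k
      have hf5 : k ≤ (a ^ N).factorization 5 :=
        (Nat.Prime.pow_dvd_iff_le_factorization (by norm_num) haN).mp h5k
      rw [Nat.factorization_pow] at hf2 hf5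
      simp only [Finsupp.smul_apply, smul_eq_mul] at hf2 hf5
      rw [ht]
      rcases le_total (a.factorization 2) (a.factorization 5) with hmin | hmin
      · rw [min_eq_left hmin]; omega
      · rw [min_eq_right hmin]; omega
    · intro hk
      refine Dvd.dvd.mul_right ?_ u
      have h2k : 2 ^ k ∣ a ^ N := by
        apply (Nat.Prime.pow_dvd_iff_le_factorization Nat.prime_two haN).mpr
        rw [Nat.factorization_pow]; simp only [Finsupp.smul_apply, smul_eq_mul]
        calc k ≤ N * t := hk
          _ ≤ N * a.factorization 2 := Nat.mul_le_mul_left _ (min_le_left _ _)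
      have h5k : 5 ^ k ∣ a ^ N := by
        apply (Nat.Prime.pow_dvd_iff_le_factorization (by norm_num) haN).mpr
        rw [Nat.factorization_pow]; simp only [Finsupp.smul_apply, smul_eq_mul]
        calc k ≤ N * t := hk
          _ ≤ N * a.factorization 5 := Nat.mul_le_mul_left _ (min_le_right _ _)
      have hcop25 : Nat.Coprime (2 ^ k) (5 ^ k) := (show Nat.Coprime 2 5 by norm_num).pow k k
      have := Nat.Coprime.mul_dvd_of_dvd_of_dvd hcop25 h2k h5k
      rwa [← Nat.mul_pow] at this
  have hset : {k : ℕ | a ^ n ≡ a ^ N [MOD 10 ^ k]} = Set.Iic (N * t) := by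
    ext k; exact key k
  rw [sharedDigits, hset, csSup_Iic]

lemma tet_pos (a : ℕ) (ha : 1 ≤ a) : ∀ b, 1 ≤ tet a b
  | 0 => le_refl 1
  | _+1 => Nat.one_le_pow _ _ ha

lemma tet_lt (a : ℕ) (ha : 2 ≤ a) (b : ℕ) : tet a b < tet a (b+1) := by
  calc tet a b < 2 ^ tet a b := Nat.lt_two_pow_self
    _ ≤ a ^ tet a b := Nat.pow_le_pow_left ha _

lemma congSpeed_eq (a : ℕ) (ha2 : 2 ∣ a) (ha5 : 5 ∣ a) (ha : 2 ≤ a) (k : ℕ) :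
    congSpeed a (k + 2) =
      ((tet a (k+1) : ℤ) - tet a k) * min (a.factorization 2) (a.factorization 5) := by
  have e1 : tet a (k+3) = a ^ tet a (k+2) := rfl
  have e2 : tet a (k+2) = a ^ tet a (k+1) := rfl
  have e3 : tet a (k+1) = a ^ tet a k := rfl
  have h1 : tet a (k+1) < tet a (k+2) := tet_lt a ha (k+1)
  have h0 : tet a k < tet a (k+1) := tet_lt a ha k
  unfold congSpeed
  simp only [show k + 2 - 1 = k + 1 from rfl, show k + 2 + 1 = k + 3 from rfl]
  rw [show sharedDigits (tet a (k+3)) (tet a (k+2)) = sharedDigits (a ^ tet a (k+2)) (a ^ tet a (k+1)) by rw [← e1, ← e2],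
      show sharedDigits (tet a (k+2)) (tet a (k+1)) = sharedDigits (a ^ tet a (k+1)) (a ^ tet a k) by rw [← e2, ← e3],
      shared_pow a ha2 ha5 ha h1, shared_pow a ha2 ha5 ha h0]
  push_cast
  ring

theorem stmt_14 (j c : ℕ) (hj : 0 < j) (hj10 : ¬ (10 ∣ j)) (hc : 0 < c) :
    ¬ ∃ (V : ℤ) (B : ℕ), ∀ b : ℕ, B ≤ b → 1 ≤ b → congSpeed (j * 10 ^ c) b = V := by
  rintro ⟨V, B, hV⟩
  set a := j * 10 ^ c with haa
  have h10 : (10 : ℕ) ∣ a := Dvd.dvd.mul_left (dvd_pow_self 10 hc.ne') j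
  have ha2 : 2 ∣ a := dvd_trans (by norm_num) h10
  have ha5 : 5 ∣ a := dvd_trans (by norm_num) h10
  have ha : 2 ≤ a := le_trans (by norm_num) (Nat.le_of_dvd (by positivity) h10)
  set t := min (a.factorization 2) (a.factorization 5) with ht
  have ht1 : 1 ≤ t := by
    have f2 : 1 ≤ a.factorization 2 := by
      rw [← Nat.Prime.pow_dvd_iff_le_factorization Nat.prime_two (by positivity)]
      simpa using ha2
    have f5 : 1 ≤ a.factorization 5 := by
      rw [← Nat.Prime.pow_dvd_iff_le_factorization (by norm_num) (by positivity)]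
      simpa using ha5
    omega
  set k := max B 2 - 2 with hk
  have hb1 : B ≤ k + 2 := by omega
  have hb2 : B ≤ k + 3 := by omega
  have hV1 := hV (k+2) hb1 (by omega)
  have hV2 := hV (k+3) hb2 (by omega)
  rw [congSpeed_eq a ha2 ha5 ha k] at hV1
  rw [show k + 3 = (k+1) + 2 from rfl, congSpeed_eq a ha2 ha5 ha (k+1)] at hV2
  -- strict growth
  have hgrow : tet a k + tet a (k+2) > 2 * tet a (k+1) := by
    have h1 : 1 ≤ tet a k := tet_pos a (by omega) k
    have h2 : tet a (k+2) = a ^ tet a (k+1) := rfl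
    have h3 : 2 * tet a (k+1) ≤ 2 ^ tet a (k+1) := by
      have := Nat.lt_two_pow_self (n := tet a (k+1) - 1)
      have hp : 2 ^ (tet a (k+1) - 1) * 2 = 2 ^ tet a (k+1) := by
        rw [← pow_succ]
        congr 1
        have := tet_pos a (by omega) (k+1)
        omega
      have htp : 1 ≤ tet a (k+1) := tet_pos a (by omega) (k+1)
      omega
    have h4 : (2:ℕ) ^ tet a (k+1) ≤ a ^ tet a (k+1) := Nat.pow_le_pow_left ha _
    omega
  have : ((tet a (k+1) : ℤ) - tet a k) * t < ((tet a (k+2) : ℤ) - tet a (k+1)) * t := by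
    apply mul_lt_mul_of_pos_right _ (by exact_mod_cast ht1)
    have c1 : (tet a k : ℤ) + tet a (k+2) > 2 * tet a (k+1) := by exact_mod_cast hgrow
    linarith
  rw [hV1, hV2] at this
  exact lt_irrefl V this
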